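/- Im(λ) < 0. -/

import Mathlib

open Set Filter Complex MeasureTheory

noncomputable section

lemma integral_cx {μ : MeasureTheory.Measure ℝ} (f : ℝ → ℝ) :
    ∫ x, ((f x : ℝ) : ℂ) ∂μ = ((∫ x, f x ∂μ : ℝ) : ℂ) :=
  integral_ofReal

set_option maxRecDepth 8000 in
/-- with `ω = exp(iπ/3)`, `a₁ ∈ ℝ`, `a₂ ≤ 0`, `a₃ ≤ 0`, if
`Y : [0,∞) → ℂ` is a twice continuously differentiable, not identically zero
solution of `Y'' = (t⁴ + a₁ωt³ + a₂ω²t² + a₃ω³t + λω⁴)Y` with `Y(0) = 0`,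
square-integrable derivative, `∫₀^∞ tᵏ|Y|² < ∞` for `k = 0,…,4`, and
`conj(Y)Y' → 0` at `+∞`, then `Im(λ) < 0`. -/
theorem stmt18 (a₁ a₂ a₃ : ℝ) (ha₂ : a₂ ≤ 0) (ha₃ : a₃ ≤ 0) (lam : ℂ)
    (Y Y' Y'' : ℝ → ℂ)
    (hY : ∀ t ∈ Set.Ici (0 : ℝ), HasDerivWithinAt Y (Y' t) (Set.Ici 0) t)
    (hY' : ∀ t ∈ Set.Ici (0 : ℝ), HasDerivWithinAt Y' (Y'' t) (Set.Ici 0) t)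
    (hY'' : ContinuousOn Y'' (Set.Ici 0))
    (hne : ∃ t ∈ Set.Ici (0 : ℝ), Y t ≠ 0)
    (h0 : Y 0 = 0)
    (hode : ∀ t ∈ Set.Ici (0 : ℝ),
      Y'' t = ((t : ℂ) ^ 4 +
          (a₁ : ℂ) * Complex.exp (Real.pi * Complex.I / 3) * (t : ℂ) ^ 3 +
          (a₂ : ℂ) * Complex.exp (Real.pi * Complex.I / 3) ^ 2 * (t : ℂ) ^ 2 +
          (a₃ : ℂ) * Complex.exp (Real.pi * Complex.I / 3) ^ 3 * (t : ℂ) +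
          lam * Complex.exp (Real.pi * Complex.I / 3) ^ 4) * Y t)
    (hi1 : MeasureTheory.IntegrableOn (fun t => ‖Y' t‖ ^ 2) (Set.Ici 0))
    (hi2 : ∀ k : ℕ, k ≤ 4 →
      MeasureTheory.IntegrableOn (fun t => t ^ k * ‖Y t‖ ^ 2) (Set.Ici 0))
    (hlim : Filter.Tendsto (fun t => (starRingEnd ℂ) (Y t) * Y' t)
      Filter.atTop (nhds 0)) :
    lam.im < 0 := by
  set ω : ℂ := Complex.exp (Real.pi * Complex.I / 3) with hωdef
  set s : ℝ := Real.sqrt 3 with hsdef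
  have hs : (0:ℝ) < s := Real.sqrt_pos.2 (by norm_num)
  have hs2 : s ^ 2 = 3 := Real.sq_sqrt (by norm_num)
  have hω : ω = ((1/2 : ℝ) : ℂ) + ((s/2 : ℝ) : ℂ) * Complex.I := by
    rw [hωdef, show ((Real.pi : ℂ) * Complex.I / 3) = ((Real.pi/3 : ℝ) : ℂ) * Complex.I by
      push_cast; ring, Complex.exp_mul_I, ← Complex.ofReal_cos, ← Complex.ofReal_sin,
      Real.cos_pi_div_three, Real.sin_pi_div_three, hsdef]
  -- continuity
  have hYc : ContinuousOn Y (Ici 0) := fun t ht => (hY t ht).continuousWithinAt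
  have hY'c : ContinuousOn Y' (Ici 0) := fun t ht => (hY' t ht).continuousWithinAt
  have hYt : ∀ t ∈ Ioi (0:ℝ), HasDerivAt Y (Y' t) t := fun t ht =>
    (hY t (mem_Ici.2 (le_of_lt ht))).hasDerivAt (Ici_mem_nhds ht)
  have hY't : ∀ t ∈ Ioi (0:ℝ), HasDerivAt Y' (Y'' t) t := fun t ht =>
    (hY' t (mem_Ici.2 (le_of_lt ht))).hasDerivAt (Ici_mem_nhds ht)
  -- integrabilities on Ioi 0
  have hik : ∀ k : ℕ, k ≤ 4 → IntegrableOn (fun t => t ^ k * ‖Y t‖ ^ 2) (Ioi (0:ℝ)) :=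
    fun k hk => (hi2 k hk).mono_set Ioi_subset_Ici_self
  have hiD : IntegrableOn (fun t : ℝ => ‖Y' t‖ ^ 2) (Ioi (0:ℝ)) :=
    hi1.mono_set Ioi_subset_Ici_self
  -- real integrals
  set D : ℝ := ∫ t in Ioi (0:ℝ), ‖Y' t‖ ^ 2 with hD
  set I0 : ℝ := ∫ t in Ioi (0:ℝ), t ^ 0 * ‖Y t‖ ^ 2 with hI0
  set I1 : ℝ := ∫ t in Ioi (0:ℝ), t ^ 1 * ‖Y t‖ ^ 2 with hI1
  set I2 : ℝ := ∫ t in Ioi (0:ℝ), t ^ 2 * ‖Y t‖ ^ 2 with hI2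
  set I3 : ℝ := ∫ t in Ioi (0:ℝ), t ^ 3 * ‖Y t‖ ^ 2 with hI3
  set I4 : ℝ := ∫ t in Ioi (0:ℝ), t ^ 4 * ‖Y t‖ ^ 2 with hI4
  have hD0 : 0 ≤ D := setIntegral_nonneg measurableSet_Ioi (fun t _ => by positivity)
  have hInn : ∀ k : ℕ, 0 ≤ ∫ t in Ioi (0:ℝ), t ^ k * ‖Y t‖ ^ 2 := fun k =>
    setIntegral_nonneg measurableSet_Ioi (fun t ht => by
      have h' : (0:ℝ) ≤ t := le_of_lt ht
      positivity)
  have hI0nn : 0 ≤ I0 := hInn 0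
  have hI1nn : 0 ≤ I1 := hInn 1
  have hI2nn : 0 ≤ I2 := hInn 2
  -- I4 > 0
  have hI4pos : 0 < I4 := by
    obtain ⟨t₀, ht₀, hYne⟩ := hne
    have ht₀pos : 0 < t₀ := by
      rcases lt_or_eq_of_le (mem_Ici.1 ht₀) with h | h
      · exact h
      · exact absurd (h ▸ h0) hYne
    have hae : (0:ℝ → ℝ) ≤ᶠ[ae (volume.restrict (Ioi (0:ℝ)))]
        fun t => t ^ 4 * ‖Y t‖ ^ 2 := by
      filter_upwards [ae_restrict_mem measurableSet_Ioi] with t ht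
      have h' : (0:ℝ) ≤ t := le_of_lt ht
      positivity
    rw [hI4, setIntegral_pos_iff_support_of_nonneg_ae hae (hik 4 le_rfl)]
    have hfc : ContinuousAt (fun t : ℝ => t ^ 4 * ‖Y t‖ ^ 2) t₀ := by
      have hYct : ContinuousAt Y t₀ := hYc.continuousAt (Ici_mem_nhds ht₀pos)
      exact ((continuous_pow 4).continuousAt).mul ((hYct.norm).pow 2)
    have hfpos : (0:ℝ) < t₀ ^ 4 * ‖Y t₀‖ ^ 2 :=
      mul_pos (pow_pos ht₀pos 4) (pow_pos (norm_pos_iff.2 hYne) 2)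
    obtain ⟨ε, hε, hball⟩ := Metric.mem_nhds_iff.1 (hfc (Ioi_mem_nhds hfpos))
    have hsub : Ioo t₀ (t₀ + ε) ⊆
        (Function.support fun t : ℝ => t ^ 4 * ‖Y t‖ ^ 2) ∩ Ioi 0 := by
      intro x hx
      refine ⟨?_, lt_trans ht₀pos hx.1⟩
      have hxball : x ∈ Metric.ball t₀ ε := by
        rw [Metric.mem_ball, Real.dist_eq, abs_lt]
        constructor
        · linarith [hx.1]
        · linarith [hx.2]
      exact ne_of_gt (hball hxball)
    refine lt_of_lt_of_le ?_ (measure_mono hsub)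
    rw [Real.volume_Ioo]
    simp only [add_sub_cancel_left]
    exact ENNReal.ofReal_pos.2 hε
  -- conj-square identity
  have hsq : ∀ z : ℂ, star z * z = ((‖z‖ ^ 2 : ℝ) : ℂ) := fun z => by
    rw [← starRingEnd_apply, mul_comm, Complex.mul_conj, Complex.normSq_eq_norm_sq]
  -- FTC / integration by parts
  have hcont0 : ContinuousWithinAt (fun t => star (Y t) * Y' t) (Ici (0:ℝ)) 0 :=
    ((hYc 0 (mem_Ici.2 le_rfl)).star).mul (hY'c 0 (mem_Ici.2 le_rfl))
  have hderiv : ∀ x ∈ Ioi (0:ℝ), HasDerivAt (fun t => star (Y t) * Y' t)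
      (star (Y' x) * Y' x + star (Y x) * Y'' x) x := fun x hx =>
    ((hYt x hx).star).mul (hY't x hx)
  have heq : ∀ t ∈ Ioi (0:ℝ), star (Y' t) * Y' t + star (Y t) * Y'' t =
      ((‖Y' t‖ ^ 2 : ℝ) : ℂ) + (((t ^ 4 * ‖Y t‖ ^ 2 : ℝ) : ℂ)
        + (↑a₁ * ω) * ((t ^ 3 * ‖Y t‖ ^ 2 : ℝ) : ℂ)
        + (↑a₂ * ω ^ 2) * ((t ^ 2 * ‖Y t‖ ^ 2 : ℝ) : ℂ)
        + (↑a₃ * ω ^ 3) * ((t ^ 1 * ‖Y t‖ ^ 2 : ℝ) : ℂ)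
        + (lam * ω ^ 4) * ((t ^ 0 * ‖Y t‖ ^ 2 : ℝ) : ℂ)) := by
    intro t ht
    rw [hode t (mem_Ici.2 (le_of_lt ht))]
    have h2 : star (Y t) * (((t:ℂ) ^ 4 + ↑a₁ * ω * (t:ℂ) ^ 3 + ↑a₂ * ω ^ 2 * (t:ℂ) ^ 2
          + ↑a₃ * ω ^ 3 * (t:ℂ) + lam * ω ^ 4) * Y t)
        = ((t:ℂ) ^ 4 + ↑a₁ * ω * (t:ℂ) ^ 3 + ↑a₂ * ω ^ 2 * (t:ℂ) ^ 2
          + ↑a₃ * ω ^ 3 * (t:ℂ) + lam * ω ^ 4) * ((‖Y t‖ ^ 2 : ℝ) : ℂ) := by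
      rw [← hsq (Y t)]; ring
    rw [hsq (Y' t), h2]
    push_cast
    ring
  -- complex integrabilities
  have iA : IntegrableOn (fun t : ℝ => ((‖Y' t‖ ^ 2 : ℝ) : ℂ)) (Ioi 0) := hiD.ofReal
  have i4 : IntegrableOn (fun t : ℝ => ((t ^ 4 * ‖Y t‖ ^ 2 : ℝ) : ℂ)) (Ioi 0) :=
    (hik 4 le_rfl).ofReal
  have i3 : IntegrableOn (fun t : ℝ => (↑a₁ * ω) * ((t ^ 3 * ‖Y t‖ ^ 2 : ℝ) : ℂ)) (Ioi 0) :=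
    ((hik 3 (by norm_num)).ofReal).const_mul _
  have i2 : IntegrableOn (fun t : ℝ => (↑a₂ * ω ^ 2) * ((t ^ 2 * ‖Y t‖ ^ 2 : ℝ) : ℂ)) (Ioi 0) :=
    ((hik 2 (by norm_num)).ofReal).const_mul _
  have i1 : IntegrableOn (fun t : ℝ => (↑a₃ * ω ^ 3) * ((t ^ 1 * ‖Y t‖ ^ 2 : ℝ) : ℂ)) (Ioi 0) :=
    ((hik 1 (by norm_num)).ofReal).const_mul _
  have i0 : IntegrableOn (fun t : ℝ => (lam * ω ^ 4) * ((t ^ 0 * ‖Y t‖ ^ 2 : ℝ) : ℂ)) (Ioi 0) :=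
    ((hik 0 (by norm_num)).ofReal).const_mul _
  have iB1 : IntegrableOn (fun t : ℝ => ((t ^ 4 * ‖Y t‖ ^ 2 : ℝ) : ℂ)
      + (↑a₁ * ω) * ((t ^ 3 * ‖Y t‖ ^ 2 : ℝ) : ℂ)) (Ioi 0) := i4.add i3
  have iB2 : IntegrableOn (fun t : ℝ => ((t ^ 4 * ‖Y t‖ ^ 2 : ℝ) : ℂ)
      + (↑a₁ * ω) * ((t ^ 3 * ‖Y t‖ ^ 2 : ℝ) : ℂ)
      + (↑a₂ * ω ^ 2) * ((t ^ 2 * ‖Y t‖ ^ 2 : ℝ) : ℂ)) (Ioi 0) := iB1.add i2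
  have iB3 : IntegrableOn (fun t : ℝ => ((t ^ 4 * ‖Y t‖ ^ 2 : ℝ) : ℂ)
      + (↑a₁ * ω) * ((t ^ 3 * ‖Y t‖ ^ 2 : ℝ) : ℂ)
      + (↑a₂ * ω ^ 2) * ((t ^ 2 * ‖Y t‖ ^ 2 : ℝ) : ℂ)
      + (↑a₃ * ω ^ 3) * ((t ^ 1 * ‖Y t‖ ^ 2 : ℝ) : ℂ)) (Ioi 0) := iB2.add i1
  have iB : IntegrableOn (fun t : ℝ => ((t ^ 4 * ‖Y t‖ ^ 2 : ℝ) : ℂ)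
      + (↑a₁ * ω) * ((t ^ 3 * ‖Y t‖ ^ 2 : ℝ) : ℂ)
      + (↑a₂ * ω ^ 2) * ((t ^ 2 * ‖Y t‖ ^ 2 : ℝ) : ℂ)
      + (↑a₃ * ω ^ 3) * ((t ^ 1 * ‖Y t‖ ^ 2 : ℝ) : ℂ)
      + (lam * ω ^ 4) * ((t ^ 0 * ‖Y t‖ ^ 2 : ℝ) : ℂ)) (Ioi 0) := iB3.add i0
  have hint' : IntegrableOn (fun t => star (Y' t) * Y' t + star (Y t) * Y'' t) (Ioi (0:ℝ)) := by
    refine IntegrableOn.congr_fun ?_ (fun t ht => (heq t ht).symm) measurableSet_Ioi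
    exact iA.add iB
  have hlim2 : Filter.Tendsto (fun t => star (Y t) * Y' t) Filter.atTop (nhds (0:ℂ)) := by
    simpa only [starRingEnd_apply] using hlim
  have hFTC := integral_Ioi_of_hasDerivAt_of_tendsto hcont0 hderiv hint' hlim2
  rw [setIntegral_congr_fun measurableSet_Ioi (fun t ht => heq t ht)] at hFTC
  rw [h0] at hFTC
  simp only [star_zero, zero_mul, sub_zero, zero_sub, neg_zero] at hFTC
  rw [integral_add iA iB,
      integral_add iB3 i0,
      integral_add iB2 i1,
      integral_add iB1 i2,
      integral_add i4 i3,
      integral_const_mul, integral_const_mul, integral_const_mul, integral_const_mul,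
      integral_cx, integral_cx, integral_cx, integral_cx, integral_cx, integral_cx] at hFTC
  rw [← hD, ← hI0, ← hI1, ← hI2, ← hI3, ← hI4] at hFTC
  -- extract real and imaginary parts
  clear_value D I0 I1 I2 I3 I4 s
  clear hY hY' hY'' hne hode hi1 hi2 hlim hlim2 hωdef hsdef hYc hY'c hYt hY't hik hiD
    hD hI0 hI1 hI2 hI3 hI4 hInn hsq hcont0 hderiv heq iA i4 i3 i2 i1 i0 iB iB1 iB2 iB3 hint' h0
  rw [show ω ^ 4 = ω * ω * ω * ω from by ring, show ω ^ 3 = ω * ω * ω from by ring,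
      show ω ^ 2 = ω * ω from by ring, hω] at hFTC
  have hre := congrArg Complex.re hFTC
  have him := congrArg Complex.im hFTC
  simp only [Complex.add_re, Complex.add_im, Complex.mul_re, Complex.mul_im,
    Complex.ofReal_re, Complex.ofReal_im, Complex.I_re, Complex.I_im,
    Complex.zero_re, Complex.zero_im, mul_zero, zero_mul, mul_one, one_mul,
    sub_zero, zero_sub, zero_add, add_zero, neg_neg, neg_zero] at hre him
  have key : s * D + s * I4 - s * a₂ * I2 - s * a₃ * I1 + 2 * lam.im * I0 = 0 := by
    linear_combination s * hre - him + (a₂*s*I2/4 + a₃*s*I1/4 - lam.im*I0*(3*s^2+11)/16 - lam.re*s*I0*(s^2+1)/16) * hs2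
  by_contra hcon
  push_neg at hcon
  nlinarith [mul_nonneg hcon hI0nn, mul_pos hs hI4pos, mul_nonneg hs.le hD0,
    mul_nonneg (mul_nonneg hs.le (neg_nonneg.2 ha₂)) hI2nn,
    mul_nonneg (mul_nonneg hs.le (neg_nonneg.2 ha₃)) hI1nn, key]
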